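/- Let (G,L) be an R-network and suppose (G',L') is obtained from (G,L) by adjoining a boundary spike e with unit weight w(e) ∈ R^× (i.e., adding a new boundary vertex e₊ joined by a single edge e to a vertex e₋ of G that becomes interior in G'). Then the inclusion induces an isomorphism Υ(G,L) ≅ Υ(G',L'). -/

import Mathlib

open Finsupp

/-- A graph with boundary (`∂`-graph) together with a generalized Laplacian datum over `R`:
oriented edges with a fixed-point-free reversal involution, local finiteness,
a set of boundary vertices, symmetric edge weights `w` and diagonal perturbation `d`. -/
structure DNetwork (R : Type) [CommRing R] where
  V : Type
  E : Type
  src : E → V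
  rev : E → E
  rev_rev : ∀ e, rev (rev e) = e
  rev_ne : ∀ e, rev e ≠ e
  finE : ∀ x : V, Fintype {e : E // src e = x}
  boundary : Set V
  w : E → R
  w_rev : ∀ e, w (rev e) = w e
  d : V → R

namespace DNetwork

variable {R : Type} [CommRing R] (N : DNetwork R)

/-- The endpoint of an oriented edge. -/
def tgt (e : N.E) : N.V := N.src (N.rev e)

/-- The generalized Laplacian evaluated at the vertex `x`, as a linear functional on
`M`-valued functions: `Lu(x) = d(x) u(x) + ∑_{e : e₊ = x} w(e) (u(x) - u(e₋))`. -/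
noncomputable def lapAt {M : Type} [AddCommGroup M] [Module R M] (x : N.V) :
    (N.V → M) →ₗ[R] M :=
  letI := N.finE x
  N.d x • (LinearMap.proj x : (N.V → M) →ₗ[R] M) +
    ∑ e : {e : N.E // N.src e = x},
      N.w e.1 • ((LinearMap.proj x : (N.V → M) →ₗ[R] M) - LinearMap.proj (N.tgt e.1))

/-- The generalized Laplacian applied to the basis chain at the vertex `x`. -/
noncomputable def lapSingle (x : N.V) : N.V →₀ R :=
  letI := N.finE x
  N.d x • Finsupp.single x 1 +
    ∑ e : {e : N.E // N.src e = x},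
      N.w e.1 • (Finsupp.single x 1 - Finsupp.single (N.tgt e.1) 1)

/-- The generalized Laplacian as a linear endomorphism of the module `RV` of `0`-chains. -/
noncomputable def chainLap : (N.V →₀ R) →ₗ[R] (N.V →₀ R) :=
  Finsupp.lsum R fun x => LinearMap.toSpanSingleton R _ (N.lapSingle x)

/-- The set of interior vertices. -/
def interior : Set N.V := N.boundaryᶜ

/-- The submodule `L(RV°)` of `RV`. -/
noncomputable def lapImage : Submodule R (N.V →₀ R) :=
  Submodule.map N.chainLap (Finsupp.supported R R N.interior)

/-- The fundamental module `Υ(G,L) = RV / L(RV°)`. -/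
abbrev Upsilon := (N.V →₀ R) ⧸ N.lapImage

/-- The submodule of `M`-valued harmonic functions `U(G,L,M)`. -/
noncomputable def harmonic (M : Type) [AddCommGroup M] [Module R M] :
    Submodule R (N.V → M) :=
  ⨅ x ∈ N.interior, LinearMap.ker (N.lapAt (M := M) x)

/-- The module `U₀(G,L,M)` of finitely supported `M`-valued functions `u` with
`u = 0` on the boundary and `Lu ≡ 0` everywhere. -/
noncomputable def U0 (M : Type) [AddCommGroup M] [Module R M] :
    Submodule R (N.V →₀ M) :=
  (⨅ x ∈ N.boundary, LinearMap.ker (Finsupp.lapply (M := M) (R := R) x)) ⊓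
    (⨅ x : N.V, LinearMap.ker ((N.lapAt (M := M) x).comp Finsupp.lcoeFun))

/-- Adjacency via an oriented edge. -/
def Adj (x y : N.V) : Prop := ∃ e : N.E, N.src e = x ∧ N.tgt e = y

/-- Connectivity of the underlying graph. -/
def Connected : Prop := ∀ x y : N.V, Relation.ReflTransGen N.Adj x y

end DNetwork


private theorem finite_subtype_sum_elim {α β γ : Type} (f : α → γ) (g : β → γ) (x : γ)
    (h1 : Finite {a : α // f a = x}) (h2 : Finite {b : β // g b = x}) :
    Finite {c : α ⊕ β // Sum.elim f g c = x} := by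
  haveI : Finite {a : α // Sum.elim f g (Sum.inl a) = x} :=
    Finite.of_equiv {a : α // f a = x}
      (Equiv.subtypeEquivRight (q := fun a => Sum.elim f g (Sum.inl a) = x)
        (fun a => by simp))
  haveI : Finite {b : β // Sum.elim f g (Sum.inr b) = x} :=
    Finite.of_equiv {b : β // g b = x}
      (Equiv.subtypeEquivRight (q := fun b => Sum.elim f g (Sum.inr b) = x)
        (fun b => by simp))
  exact Finite.of_equiv _ (Equiv.subtypeSum (p := fun c => Sum.elim f g c = x)).symm

/-- The network obtained from `N` by adjoining a boundary spike at the vertex `y` (which is a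
boundary vertex of `N` and becomes interior): a new boundary vertex `none` is joined to
`some y` by a single new edge of weight `ω`, and the diagonal entry at the new vertex is `δ`.
All old weights and diagonal entries are kept. -/
noncomputable def DNetwork.addSpike {R : Type} [CommRing R] (N : DNetwork R)
    (y : N.V) (ω δ : R) : DNetwork R where
  V := Option N.V
  E := N.E ⊕ Bool
  src := Sum.elim (fun e => some (N.src e)) (fun b => if b then none else some y)
  rev := Sum.elim (fun e => Sum.inl (N.rev e)) (fun b => Sum.inr (!b))
  rev_rev := by rintro (e | b) <;> simp [N.rev_rev]
  rev_ne := by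
    rintro (e | b)
    · simpa using N.rev_ne e
    · simp
  finE := fun x => by
    classical
    haveI h1 : Finite {a : N.E // (some (N.src a) : Option N.V) = x} := by
      cases x with
      | none =>
        haveI : IsEmpty {a : N.E // (some (N.src a) : Option N.V) = none} :=
          ⟨fun e => by simpa using e.2⟩
        infer_instance
      | some v =>
        haveI := N.finE v
        refine Finite.of_injective
          (fun a => (⟨a.1, by simpa using a.2⟩ : {e : N.E // N.src e = v})) ?_
        intro a b h
        apply Subtype.ext
        have := congrArg Subtype.val h
        simpa using this
    haveI h2 : Finite {b : Bool // (if b then none else some y : Option N.V) = x} :=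
      Finite.of_injective (fun b => b.1) Subtype.val_injective
    haveI := finite_subtype_sum_elim (fun e : N.E => (some (N.src e) : Option N.V))
      (fun b : Bool => (if b then none else some y : Option N.V)) x h1 h2
    exact Fintype.ofFinite _
  boundary := insert none (some '' (N.boundary \ {y}))
  w := Sum.elim N.w fun _ => ω
  w_rev := by rintro (e | b) <;> simp [N.w_rev]
  d := fun x => x.elim δ N.d

namespace SpikeAux

open Finsupp DNetwork

variable {R : Type} [CommRing R]

theorem chainLap_single (N : DNetwork R) (x : N.V) :
    N.chainLap (Finsupp.single x 1) = N.lapSingle x := by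
  simp [DNetwork.chainLap, Finsupp.lsum_single, LinearMap.toSpanSingleton_apply_one]

theorem lapImage_eq_span (N : DNetwork R) :
    N.lapImage = Submodule.span R (N.lapSingle '' N.interior) := by
  rw [DNetwork.lapImage, Finsupp.supported_eq_span_single, Submodule.map_span,
    ← Set.image_comp]
  exact congrArg _ (Set.image_congr fun x _ => chainLap_single N x)

theorem lapSingle_mem (N : DNetwork R) {x : N.V} (hx : x ∈ N.interior) :
    N.lapSingle x ∈ N.lapImage := by
  rw [lapImage_eq_span]
  exact Submodule.subset_span ⟨x, hx, rfl⟩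

theorem mapDomain_sub' {α β M : Type} [AddCommGroup M] (f : α → β) (a b : α →₀ M) :
    Finsupp.mapDomain f (a - b) = Finsupp.mapDomain f a - Finsupp.mapDomain f b :=
  map_sub (Finsupp.mapDomain.addMonoidHom f) a b

theorem mapDomain_term {α β : Type} (f : α → β) (c : R) (a b : α) :
    Finsupp.mapDomain f (c • (Finsupp.single a (1 : R) - Finsupp.single b 1)) =
      c • (Finsupp.single (f a) (1 : R) - Finsupp.single (f b) 1) := by
  rw [Finsupp.mapDomain_smul, mapDomain_sub', Finsupp.mapDomain_single, Finsupp.mapDomain_single]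

variable (N : DNetwork R) (y : N.V) (ω δ : R)

theorem addSpike_tgt_inl (e : N.E) :
    (N.addSpike y ω δ).tgt (Sum.inl e) = some (N.tgt e) := rfl

theorem addSpike_tgt_false :
    (N.addSpike y ω δ).tgt (Sum.inr false) = none := rfl

theorem addSpike_tgt_true :
    (N.addSpike y ω δ).tgt (Sum.inr true) = some y := rfl

theorem addSpike_interior_some {v : N.V} (hv : v ∉ N.boundary ∨ v = y) :
    (some v) ∈ (N.addSpike y ω δ).interior := by
  intro h
  rcases h with h | ⟨a, ⟨ha, hay⟩, hav⟩
  · simp at h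
  · rcases Option.some_injective _ hav
    rcases hv with hv | hv
    · exact hv ha
    · exact hay hv

theorem addSpike_lapSingle_some {v : N.V} (hv : v ≠ y) :
    (N.addSpike y ω δ).lapSingle (some v) = Finsupp.mapDomain some (N.lapSingle v) := by
  classical
  letI := N.finE v
  letI := (N.addSpike y ω δ).finE (some v)
  unfold DNetwork.lapSingle
  rw [Finsupp.mapDomain_add, Finsupp.mapDomain_smul,
    Finsupp.mapDomain_single, Finsupp.mapDomain_finset_sum]
  congr 1
  refine (Fintype.sum_bijective
    (fun a : {e : N.E // N.src e = v} =>
      (⟨Sum.inl a.1, by simp [DNetwork.addSpike, a.2]⟩ :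
        {e : (N.addSpike y ω δ).E // (N.addSpike y ω δ).src e = some v})) ⟨?_, ?_⟩ _ _ ?_).symm
  · intro a b h
    exact Subtype.ext (Sum.inl_injective (congrArg Subtype.val h))
  · rintro ⟨(e | b), he⟩
    · exact ⟨⟨e, Option.some_injective _ he⟩, Subtype.ext rfl⟩
    · exfalso
      cases b
      · exact hv (Option.some_injective _ he.symm)
      · exact absurd he (by simp [DNetwork.addSpike])
  · intro a
    rw [mapDomain_term]
    rfl

theorem addSpike_lapSingle_y :
    (N.addSpike y ω δ).lapSingle (some y) = Finsupp.mapDomain some (N.lapSingle y) +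
      ω • (Finsupp.single (some y) 1 - Finsupp.single (none : Option N.V) (1 : R)) := by
  classical
  letI := N.finE y
  letI := (N.addSpike y ω δ).finE (some y)
  unfold DNetwork.lapSingle
  rw [Finsupp.mapDomain_add, Finsupp.mapDomain_smul,
    Finsupp.mapDomain_single, Finsupp.mapDomain_finset_sum]
  simp only [mapDomain_term]
  refine Eq.trans ?_ (add_assoc _ _ _).symm
  congr 1
  refine Eq.trans (Eq.symm (Fintype.sum_bijective
    (Sum.elim
      (fun a : {e : N.E // N.src e = y} =>
        (⟨Sum.inl a.1, by simp [DNetwork.addSpike, a.2]⟩ :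
          {e : (N.addSpike y ω δ).E // (N.addSpike y ω δ).src e = some y}))
      (fun _ : Unit =>
        (⟨Sum.inr false, by simp [DNetwork.addSpike]⟩ :
          {e : (N.addSpike y ω δ).E // (N.addSpike y ω δ).src e = some y})))
    ⟨?_, ?_⟩
    (Sum.elim
      (fun a : {e : N.E // N.src e = y} =>
        N.w a.1 • (Finsupp.single (some y) (1:R) - Finsupp.single (some (N.tgt a.1)) 1))
      (fun _ : Unit =>
        ω • (Finsupp.single (some y) (1:R) - Finsupp.single (none : Option N.V) 1)))
    _ ?_)) ?_
  · rintro (a | u) (b | u') h <;>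
      simp only [Sum.elim_inl, Sum.elim_inr] at h <;>
      first
        | (exact congrArg Sum.inl (Subtype.ext (Sum.inl_injective (congrArg Subtype.val h))))
        | (exact absurd (congrArg Subtype.val h) (by simp))
        | rfl
  · rintro ⟨(e | b), he⟩
    · exact ⟨Sum.inl ⟨e, Option.some_injective _ he⟩, Subtype.ext rfl⟩
    · cases b
      · exact ⟨Sum.inr ⟨⟩, Subtype.ext rfl⟩
      · exact absurd he (by simp [DNetwork.addSpike])
  · rintro (a | u) <;> rfl
  · rw [Fintype.sum_sum_type]
    simp
    rfl

theorem addSpike_lapSingle_none :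
    (N.addSpike y ω δ).lapSingle none = δ • Finsupp.single (none : Option N.V) (1 : R) +
      ω • (Finsupp.single (none : Option N.V) 1 - Finsupp.single (some y) 1) := by
  classical
  letI := (N.addSpike y ω δ).finE (none : Option N.V)
  unfold DNetwork.lapSingle
  congr 1
  refine Eq.trans (Eq.symm (Fintype.sum_bijective
    (fun _ : Unit =>
      (⟨Sum.inr true, by simp [DNetwork.addSpike]⟩ :
        {e : (N.addSpike y ω δ).E // (N.addSpike y ω δ).src e = none}))
    ⟨?_, ?_⟩
    (fun _ : Unit => ω • (Finsupp.single (none : Option N.V) (1:R) - Finsupp.single (some y) 1))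
    _ ?_)) ?_
  · intro a b _; rfl
  · rintro ⟨(e | b), he⟩
    · exact absurd he (by simp [DNetwork.addSpike])
    · cases b
      · exact absurd he (by simp [DNetwork.addSpike])
      · exact ⟨⟨⟩, Subtype.ext rfl⟩
  · intro u; rfl
  · simp
    rfl

end SpikeAux

open SpikeAux

/-- adjoining a boundary spike with unit weight induces an isomorphism
`Υ(G,L) ≅ Υ(G',L')`, sending the class of a vertex to the class of its image. -/
theorem upsilon_iso_of_addSpike {R : Type} [CommRing R] (N : DNetwork R)
    (y : N.V) (hy : y ∈ N.boundary) (ω : R) (hω : IsUnit ω) (δ : R) :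
    ∃ φ : N.Upsilon ≃ₗ[R] (N.addSpike y ω δ).Upsilon,
      ∀ v : N.V,
        φ (N.lapImage.mkQ (Finsupp.single v 1)) =
          (N.addSpike y ω δ).lapImage.mkQ (Finsupp.single (some v) 1) := by
  classical
  set N' := N.addSpike y ω δ with hN'
  set ωi : R := ↑hω.unit⁻¹ with hωidef
  have hωi1 : ω * ωi = 1 := IsUnit.mul_val_inv hω
  have hωi2 : ωi * ω = 1 := IsUnit.val_inv_mul hω
  -- forward map
  have hsub : N.lapImage ≤ LinearMap.ker (N'.lapImage.mkQ.comp (Finsupp.lmapDomain R R some)) := by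
    rw [lapImage_eq_span, Submodule.span_le]
    rintro _ ⟨x, hx, rfl⟩
    have hne : x ≠ y := fun h => hx (h ▸ hy)
    simp only [SetLike.mem_coe, LinearMap.mem_ker, LinearMap.comp_apply,
      Finsupp.lmapDomain_apply, Submodule.mkQ_apply, Submodule.Quotient.mk_eq_zero]
    show Finsupp.mapDomain some (N.lapSingle x) ∈ N'.lapImage
    rw [← addSpike_lapSingle_some N y ω δ hne]
    exact lapSingle_mem N' (addSpike_interior_some N y ω δ (Or.inl hx))
  let Φ : N.Upsilon →ₗ[R] N'.Upsilon := N.lapImage.liftQ _ hsub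
  have hΦ : ∀ u : N.V →₀ R, Φ (N.lapImage.mkQ u) = N'.lapImage.mkQ (Finsupp.mapDomain Option.some u) :=
    fun u => rfl
  -- backward map
  let ψ0 : Option N.V → N.Upsilon := fun x =>
    x.elim (N.lapImage.mkQ (ωi • N.lapSingle y + Finsupp.single y 1))
      (fun v => N.lapImage.mkQ (Finsupp.single v 1))
  let F : (Option N.V →₀ R) →ₗ[R] N.Upsilon :=
    Finsupp.lsum R fun x => LinearMap.toSpanSingleton R _ (ψ0 x)
  have hF : ∀ x, F (Finsupp.single x 1) = ψ0 x := fun x => by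
    simp [F, Finsupp.lsum_single, LinearMap.toSpanSingleton_apply_one]
  have hFmap : ∀ u : N.V →₀ R, F (Finsupp.mapDomain Option.some u) = N.lapImage.mkQ u := by
    intro u
    induction u using Finsupp.induction_linear with
    | zero => simp [Finsupp.mapDomain_zero]
    | add a b ha hb => rw [Finsupp.mapDomain_add, map_add, ha, hb, ← map_add]
    | single a b =>
      rw [Finsupp.mapDomain_single]
      have hb : (Finsupp.single (some a) b : Option N.V →₀ R) = b • Finsupp.single (some a) 1 := by
        rw [Finsupp.smul_single, smul_eq_mul, mul_one]
      rw [hb, map_smul, hF]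
      show b • N.lapImage.mkQ (Finsupp.single a 1) = _
      rw [← map_smul, Finsupp.smul_single, smul_eq_mul, mul_one]
  have hkerF : N'.lapImage ≤ LinearMap.ker F := by
    rw [lapImage_eq_span]
    refine Submodule.span_le.mpr ?_
    rintro _ ⟨x, hx, rfl⟩
    change F (N'.lapSingle x) = 0
    cases x with
    | none =>
      exact absurd (Set.mem_insert _ _) hx
    | some v =>
      by_cases hvy : v = y
      · subst hvy
        rw [addSpike_lapSingle_y]
        erw [map_add, map_smul, map_sub]
        have hgoal : F (Finsupp.mapDomain Option.some (N.lapSingle v)) +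
            ω • (F (Finsupp.single (Option.some v) (1:R)) -
              F (Finsupp.single (none : Option N.V) (1:R))) = 0 := by
          rw [hFmap, hF, hF]
          show N.lapImage.mkQ (N.lapSingle v) +
            ω • (N.lapImage.mkQ (Finsupp.single v 1) -
              N.lapImage.mkQ (ωi • N.lapSingle v + Finsupp.single v 1)) = 0
          rw [map_add, map_smul, smul_sub, smul_add, smul_smul, hωi1, one_smul]
          abel
        exact hgoal
      · have hvb : v ∉ N.boundary := by
          intro hb
          exact hx (by
            right
            exact ⟨v, ⟨hb, hvy⟩, rfl⟩)
        rw [addSpike_lapSingle_some N y ω δ hvy]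
        refine (hFmap (N.lapSingle v)).trans ?_
        rw [Submodule.mkQ_apply, Submodule.Quotient.mk_eq_zero]
        exact lapSingle_mem N hvb
  let Ψ : N'.Upsilon →ₗ[R] N.Upsilon := N'.lapImage.liftQ F hkerF
  have hΨ : ∀ u, Ψ (N'.lapImage.mkQ u) = F u := fun u => rfl
  have h1 : Φ.comp Ψ = LinearMap.id := by
    rw [← LinearMap.cancel_right (Submodule.mkQ_surjective N'.lapImage)]
    refine Finsupp.lhom_ext fun a b => ?_
    have hb : (Finsupp.single a b : N'.V →₀ R) = b • Finsupp.single a 1 := by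
      rw [Finsupp.smul_single, smul_eq_mul, mul_one]
    rw [hb]
    simp only [LinearMap.comp_apply, map_smul, LinearMap.id_apply]
    congr 1
    rw [hΨ]
    erw [hF]
    cases a with
    | some v =>
      rw [show ψ0 (some v) = N.lapImage.mkQ (Finsupp.single v 1) from rfl, hΦ]
      erw [Finsupp.mapDomain_single]
    | none =>
      rw [show ψ0 none = N.lapImage.mkQ (ωi • N.lapSingle y + Finsupp.single y 1) from rfl, hΦ]
      erw [Finsupp.mapDomain_add, Finsupp.mapDomain_smul, Finsupp.mapDomain_single]
      rw [Submodule.mkQ_apply, Submodule.mkQ_apply, Submodule.Quotient.eq]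
      have heq : ωi • Finsupp.mapDomain Option.some (N.lapSingle y) + Finsupp.single (some y) 1 -
          Finsupp.single (none : Option N.V) 1 = ωi • N'.lapSingle (some y) := by
        rw [addSpike_lapSingle_y]
        erw [smul_add, smul_smul, hωi2, one_smul]
        exact add_sub_assoc _ _ _
      erw [heq]
      exact Submodule.smul_mem _ _
        (lapSingle_mem N' (addSpike_interior_some N y ω δ (Or.inr rfl)))
  have h2 : Ψ.comp Φ = LinearMap.id := by
    rw [← LinearMap.cancel_right (Submodule.mkQ_surjective N.lapImage)]
    refine Finsupp.lhom_ext fun a b => ?_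
    have hb : (Finsupp.single a b : N.V →₀ R) = b • Finsupp.single a 1 := by
      rw [Finsupp.smul_single, smul_eq_mul, mul_one]
    rw [hb]
    simp only [LinearMap.comp_apply, map_smul, LinearMap.id_apply]
    congr 1
    rw [Submodule.mkQ_apply] at *
    rw [show Φ (Submodule.Quotient.mk (Finsupp.single a 1)) =
      N'.lapImage.mkQ (Finsupp.mapDomain Option.some (Finsupp.single a 1)) from rfl]
    erw [Finsupp.mapDomain_single, hΨ, hF]
    rfl
  refine ⟨LinearEquiv.ofLinear Φ Ψ h1 h2, fun v => ?_⟩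
  show Φ (N.lapImage.mkQ (Finsupp.single v 1)) = _
  rw [hΦ]
  erw [Finsupp.mapDomain_single]
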